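/- The centralizer algebra End_{S_n}(Sym^k(ℂⁿ)) is spanned by the elements T^λ_μ, as (λ, μ) ranges over pairs of length-k partitions with entries in {1,...,n}. -/
import Mathlib


/-- Model of the symmetric power `Sym^k(ℂⁿ)`: the free ℂ-module on the basis
indexed by length-`k` partitions with entries in `{1,…,n}`, i.e. size-`k`
multisets from an `n`-element set (basis vector `v_λ = Pi.single λ 1`). -/
abbrev SymV (n k : ℕ) : Type := Sym (Fin n) k → ℂ

/-- The diagonal action of a permutation matrix `σ ∈ S_n ⊆ GL_n(ℂ)` on `Sym^k(ℂⁿ)`: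
the linear map sending the basis vector `v_λ` to `v_{σλ}`, where `σλ` is obtained by
applying `σ` entrywise (and sorting). -/
noncomputable def permAct (n k : ℕ) (σ : Equiv.Perm (Fin n)) : Module.End ℂ (SymV n k) :=
  LinearMap.funLeft ℂ ℂ (Sym.map ⇑σ⁻¹)

/-- The centralizer algebra `End_{S_n}(Sym^k(ℂⁿ))`. -/
noncomputable def centAlg (n k : ℕ) : Subalgebra ℂ (Module.End ℂ (SymV n k)) :=
  Subalgebra.centralizer ℂ (Set.range (permAct n k))

/-- The matrix unit `E^ν_γ` sending the basis vector `v_ν` to `v_γ` and every other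
basis vector to `0`. -/
noncomputable def Eunit (n k : ℕ) (nu ga : Sym (Fin n) k) : Module.End ℂ (SymV n k) :=
  (LinearMap.proj nu).smulRight (Pi.single ga 1)

open scoped Classical in
/-- `T^λ_μ`, the sum of the matrix units `E^ν_γ` over all pairs `(ν, γ)` for which
there exists `ρ ∈ S_n` with `λ = ρν` and `μ = ργ`. -/
noncomputable def Tmap (n k : ℕ) (lam mu : Sym (Fin n) k) : Module.End ℂ (SymV n k) :=
  ∑ p : Sym (Fin n) k × Sym (Fin n) k,
    if ∃ ρ : Equiv.Perm (Fin n), lam = Sym.map ρ p.1 ∧ mu = Sym.map ρ p.2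
    then Eunit n k p.1 p.2 else 0

open scoped Classical

namespace CentAux

variable {n k : ℕ}

lemma map_inv_map (σ : Equiv.Perm (Fin n)) (a : Sym (Fin n) k) :
    Sym.map ⇑σ⁻¹ (Sym.map ⇑σ a) = a := by
  rw [Sym.map_map]; simp

lemma map_map_inv (σ : Equiv.Perm (Fin n)) (a : Sym (Fin n) k) :
    Sym.map ⇑σ (Sym.map ⇑σ⁻¹ a) = a := by
  rw [Sym.map_map]; simp

lemma map_inv_eq_iff (σ : Equiv.Perm (Fin n)) {a b : Sym (Fin n) k} :
    Sym.map ⇑σ⁻¹ a = b ↔ a = Sym.map ⇑σ b := by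
  constructor
  · rintro rfl; rw [map_map_inv]
  · rintro rfl; rw [map_inv_map]

/-- the orbit relation on pairs -/
def R (p q : Sym (Fin n) k × Sym (Fin n) k) : Prop :=
  ∃ ρ : Equiv.Perm (Fin n), p.1 = Sym.map ⇑ρ q.1 ∧ p.2 = Sym.map ⇑ρ q.2

lemma R_refl (p : Sym (Fin n) k × Sym (Fin n) k) : R p p :=
  ⟨1, by simp, by simp⟩

lemma R_symm {p q : Sym (Fin n) k × Sym (Fin n) k} (h : R p q) : R q p := by
  obtain ⟨ρ, h1, h2⟩ := h
  exact ⟨ρ⁻¹, by rw [h1, map_inv_map], by rw [h2, map_inv_map]⟩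

lemma R_trans {p q r : Sym (Fin n) k × Sym (Fin n) k} (h : R p q) (h' : R q r) : R p r := by
  obtain ⟨ρ, h1, h2⟩ := h
  obtain ⟨τ, g1, g2⟩ := h'
  refine ⟨ρ * τ, ?_, ?_⟩
  · rw [h1, g1, Sym.map_map]; rfl
  · rw [h2, g2, Sym.map_map]; rfl

lemma Tmap_eq (lam mu : Sym (Fin n) k) :
    Tmap n k lam mu = ∑ p : Sym (Fin n) k × Sym (Fin n) k,
      if R (lam, mu) p then Eunit n k p.1 p.2 else 0 :=
  Finset.sum_congr rfl fun _ _ => if_congr Iff.rfl rfl rfl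

lemma Eunit_apply (nu ga : Sym (Fin n) k) (x : SymV n k) :
    Eunit n k nu ga x = x nu • (Pi.single ga 1 : SymV n k) := rfl

lemma permAct_apply (σ : Equiv.Perm (Fin n)) (x : SymV n k) (lam : Sym (Fin n) k) :
    permAct n k σ x lam = x (Sym.map ⇑σ⁻¹ lam) := rfl

lemma permAct_single (σ : Equiv.Perm (Fin n)) (nu : Sym (Fin n) k) :
    permAct n k σ (Pi.single nu 1 : SymV n k) = Pi.single (Sym.map ⇑σ nu) 1 := by
  funext lam
  rw [permAct_apply, Pi.single_apply, Pi.single_apply]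
  congr 1
  simp only [eq_iff_iff]
  constructor
  · intro h; rw [← h, map_map_inv]
  · intro h; rw [h, map_inv_map]

lemma permAct_mul_Eunit (σ : Equiv.Perm (Fin n)) (nu ga : Sym (Fin n) k) :
    permAct n k σ * Eunit n k nu ga = Eunit n k nu (Sym.map ⇑σ ga) := by
  refine LinearMap.ext fun x => ?_
  rw [Module.End.mul_apply, Eunit_apply, map_smul, permAct_single, Eunit_apply]

lemma Eunit_mul_permAct (σ : Equiv.Perm (Fin n)) (nu ga : Sym (Fin n) k) :
    Eunit n k nu ga * permAct n k σ = Eunit n k (Sym.map ⇑σ⁻¹ nu) ga := by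
  refine LinearMap.ext fun x => ?_
  rw [Module.End.mul_apply, Eunit_apply, Eunit_apply, permAct_apply]

/-- pair-mapping equivalence -/
noncomputable def pairEquiv (σ : Equiv.Perm (Fin n)) :
    (Sym (Fin n) k × Sym (Fin n) k) ≃ (Sym (Fin n) k × Sym (Fin n) k) where
  toFun p := (Sym.map ⇑σ p.1, Sym.map ⇑σ p.2)
  invFun p := (Sym.map ⇑σ⁻¹ p.1, Sym.map ⇑σ⁻¹ p.2)
  left_inv p := by simp [map_inv_map]
  right_inv p := by simp [map_map_inv]

lemma R_pairEquiv (a : Sym (Fin n) k × Sym (Fin n) k) (σ : Equiv.Perm (Fin n))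
    (q : Sym (Fin n) k × Sym (Fin n) k) : R a (pairEquiv σ q) ↔ R a q := by
  constructor
  · intro h
    exact R_trans h ⟨σ, rfl, rfl⟩
  · intro h
    refine R_trans h (R_symm ⟨σ, rfl, rfl⟩)

lemma Tmap_mem_centAlg (lam mu : Sym (Fin n) k) :
    Tmap n k lam mu ∈ centAlg n k := by
  rw [centAlg, Subalgebra.mem_centralizer_iff]
  rintro _ ⟨σ, rfl⟩
  rw [Tmap_eq, Finset.sum_mul, Finset.mul_sum]
  refine Eq.symm (Fintype.sum_equiv (pairEquiv σ⁻¹) _ _ fun q => ?_)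
  rw [mul_ite, mul_zero, permAct_mul_Eunit, ite_mul, zero_mul, Eunit_mul_permAct]
  rw [R_pairEquiv]
  by_cases h : R (lam, mu) q
  · rw [if_pos h, if_pos h]
    show Eunit n k (Sym.map (⇑σ⁻¹) q.1) q.2
      = Eunit n k (Sym.map (⇑σ⁻¹) q.1) (Sym.map (⇑σ) (Sym.map (⇑σ⁻¹) q.2))
    rw [map_map_inv]
  · rw [if_neg h, if_neg h]

lemma single_eq (i : Sym (Fin n) k) :
    (Pi.single i 1 : SymV n k) = fun j => if i = j then 1 else 0 :=
  funext fun j => by rw [Pi.single_apply]; exact if_congr eq_comm rfl rfl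

/-- matrix coefficients -/
noncomputable def coef (f : Module.End ℂ (SymV n k)) (p : Sym (Fin n) k × Sym (Fin n) k) : ℂ :=
  f (Pi.single p.1 1) p.2

lemma coef_constant {f : Module.End ℂ (SymV n k)} (hf : f ∈ centAlg n k)
    {p q : Sym (Fin n) k × Sym (Fin n) k} (h : R p q) : coef f p = coef f q := by
  rw [centAlg, Subalgebra.mem_centralizer_iff] at hf
  obtain ⟨ρ, h1, h2⟩ := h
  have hc := hf (permAct n k ρ) ⟨ρ, rfl⟩
  have := congrFun (congrArg (fun g => g (Pi.single q.1 1)) hc) (Sym.map (⇑ρ) q.2)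
  simp only [Module.End.mul_apply] at this
  rw [permAct_apply, map_inv_map] at this
  have h3 : permAct n k ρ (Pi.single q.1 1 : SymV n k) = Pi.single (Sym.map (⇑ρ) q.1) 1 :=
    permAct_single ρ q.1
  rw [h3] at this
  unfold coef
  rw [h1, h2]
  exact this.symm

lemma eq_sum_coef (f : Module.End ℂ (SymV n k)) :
    f = ∑ p : Sym (Fin n) k × Sym (Fin n) k, coef f p • Eunit n k p.1 p.2 := by
  refine LinearMap.ext fun x => ?_
  rw [LinearMap.pi_apply_eq_sum_univ f x]
  rw [Fintype.sum_prod_type, LinearMap.sum_apply]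
  refine Finset.sum_congr rfl fun nu _ => ?_
  rw [LinearMap.sum_apply]
  have : ∀ ga : Sym (Fin n) k,
      (coef f (nu, ga) • Eunit n k nu ga) x = x nu • (f (Pi.single nu 1) ga • (Pi.single ga 1 : SymV n k)) := by
    intro ga
    rw [LinearMap.smul_apply, Eunit_apply, coef]
    rw [smul_comm]
  rw [Finset.sum_congr rfl fun ga _ => this ga, ← Finset.smul_sum]
  congr 1
  rw [← single_eq nu]
  conv_lhs => rw [pi_eq_sum_univ (f (Pi.single nu 1))]
  refine Finset.sum_congr rfl fun ga _ => ?_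
  rw [← single_eq ga]

/-- orbit size -/
noncomputable def osize (p : Sym (Fin n) k × Sym (Fin n) k) : ℂ :=
  ((Finset.univ.filter (fun q => R q p)).card : ℂ)

lemma osize_ne_zero (p : Sym (Fin n) k × Sym (Fin n) k) : osize p ≠ 0 := by
  exact Nat.cast_ne_zero.2
    (Finset.card_ne_zero_of_mem (Finset.mem_filter.2 ⟨Finset.mem_univ p, R_refl p⟩))

lemma osize_constant {p q : Sym (Fin n) k × Sym (Fin n) k} (h : R p q) : osize p = osize q := by
  have heq : Finset.univ.filter (fun r => R r p) = Finset.univ.filter (fun r => R r q) :=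
    Finset.filter_congr fun r _ =>
      ⟨fun hr => R_trans hr h, fun hr => R_trans hr (R_symm h)⟩
  rw [osize, osize, heq]

lemma mem_span_of_mem_centAlg {f : Module.End ℂ (SymV n k)} (hf : f ∈ centAlg n k) :
    f ∈ Submodule.span ℂ
      (Set.range fun p : Sym (Fin n) k × Sym (Fin n) k => Tmap n k p.1 p.2) := by
  have key : f = ∑ p : Sym (Fin n) k × Sym (Fin n) k,
      (coef f p / osize p) • Tmap n k p.1 p.2 := by
    conv_lhs => rw [eq_sum_coef f]
    have : ∀ p : Sym (Fin n) k × Sym (Fin n) k,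
        (coef f p / osize p) • Tmap n k p.1 p.2
          = ∑ q : Sym (Fin n) k × Sym (Fin n) k,
              (if R p q then (coef f p / osize p) else 0) • Eunit n k q.1 q.2 := by
      intro p
      rw [Tmap_eq, Finset.smul_sum]
      refine Finset.sum_congr rfl fun q _ => ?_
      rw [smul_ite, smul_zero, ite_smul, zero_smul]
    rw [Finset.sum_congr rfl fun p _ => this p, Finset.sum_comm]
    refine Finset.sum_congr rfl fun q _ => ?_
    rw [← Finset.sum_smul]
    congr 1
    have hsum : ∑ p : Sym (Fin n) k × Sym (Fin n) k,
        (if R p q then (coef f p / osize p) else 0)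
        = ∑ p ∈ Finset.univ.filter (fun p => R p q), (coef f p / osize p) := by
      rw [Finset.sum_filter]
    rw [hsum]
    rw [Finset.sum_congr rfl (fun p hp => by
      have h : R p q := (Finset.mem_filter.1 hp).2
      rw [coef_constant hf h, osize_constant h])]
    rw [Finset.sum_const, nsmul_eq_mul]
    rw [div_eq_mul_inv, ← mul_assoc]
    rw [show ((Finset.univ.filter (fun p => R p q)).card : ℂ) = osize q from rfl]
    rw [mul_comm (osize q) (coef f q), mul_assoc, mul_inv_cancel₀ (osize_ne_zero q), mul_one]
  rw [key]
  refine Submodule.sum_mem _ fun p _ => Submodule.smul_mem _ _ ?_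
  exact Submodule.subset_span ⟨p, rfl⟩

end CentAux

/-- The centralizer algebra `End_{S_n}(Sym^k(ℂⁿ))` is spanned by the elements
`T^λ_μ` as `(λ, μ)` ranges over pairs of length-`k` partitions with entries in
`{1,…,n}`. -/
theorem centAlg_eq_span_Tmap (n k : ℕ) :
    (centAlg n k : Set (Module.End ℂ (SymV n k)))
      = ↑(Submodule.span ℂ
          (Set.range fun p : Sym (Fin n) k × Sym (Fin n) k => Tmap n k p.1 p.2)) := by
  ext f
  simp only [SetLike.mem_coe]
  constructor
  · exact fun hf => CentAux.mem_span_of_mem_centAlg hf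
  · intro hf
    have hle : Submodule.span ℂ
        (Set.range fun p : Sym (Fin n) k × Sym (Fin n) k => Tmap n k p.1 p.2)
        ≤ Subalgebra.toSubmodule (centAlg n k) := by
      rw [Submodule.span_le]
      rintro _ ⟨p, rfl⟩
      exact CentAux.Tmap_mem_centAlg p.1 p.2
    exact hle hf
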